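/- Let ℒ be a finite-dimensional 𝔽₂-vector space, let u be an integer, let a be a nonnegative integer, and let λ : 𝔽₂^a → ℒ be an 𝔽₂-linear map. Then the limit as n → ∞ (over integers n ≥ max(u,0)) of ∑_{c = max(u,0)}^{n} P^Mat(c | (n−u)×n) · (#ℒ)^{−c} · ∑_{L} N(ι : L∘ι = λ) exists and equals (#ℒ)^{−a} · 2^{au}, where the inner sum is over all 𝔽₂-linear maps L : 𝔽₂^c → ℒ and N(ι : L∘ι = λ) denotes the number of injective 𝔽₂-linear maps ι : 𝔽₂^a → 𝔽₂^c with L∘ι = λ. -/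

import Mathlib

open Matrix

/-- `P^Mat(j | m×n)`: the probability that a uniformly random `m×n` matrix over `𝔽₂`
has kernel of dimension `j`. -/
noncomputable def PMat (m n j : ℕ) : ℝ :=
  (Nat.card {T : Matrix (Fin m) (Fin n) (ZMod 2) //
      Module.finrank (ZMod 2) (LinearMap.ker T.mulVecLin) = j} : ℝ) / 2 ^ (m * n)

namespace Stmt14Aux

local notation "F" => ZMod 2
attribute [local instance] Fintype.ofFinite

variable {V W : Type*} [AddCommGroup V] [Module F V] [AddCommGroup W] [Module F W]

lemma lc_expand {a : ℕ} (f : (Fin a → F) →ₗ[F] V) (g : Fin a → F) :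
    f g = ∑ i, g i • f (Pi.single i 1) := by
  have h : g = ∑ i, g i • Pi.single i (1 : F) := by
    funext j
    simp [Pi.single_apply, Finset.sum_apply]
  conv_lhs => rw [h]
  simp [map_sum]

lemma inj_iff_li {a : ℕ} (f : (Fin a → F) →ₗ[F] V) :
    Function.Injective f ↔ LinearIndependent F (fun i => f (Pi.single i 1)) := by
  rw [Fintype.linearIndependent_iff, ← LinearMap.ker_eq_bot, LinearMap.ker_eq_bot']
  constructor
  · intro h g hg
    have := h g (by rw [lc_expand]; exact hg)
    exact fun i => congrFun this i
  · intro h g hg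
    funext i
    exact h g (by rw [← lc_expand]; exact hg) i

lemma card_inj (a : ℕ) [FiniteDimensional F V] :
    Nat.card {f : (Fin a → F) →ₗ[F] V // Function.Injective f} =
      ∏ i ∈ Finset.range a, (2 ^ Module.finrank F V - 2 ^ i) := by
  have : Finite V := Module.finite_of_finite F
  have e : {f : (Fin a → F) →ₗ[F] V // Function.Injective f} ≃
      {v : Fin a → V // LinearIndependent F v} := by
    refine (Equiv.subtypeEquiv (LinearEquiv.piRing (ZMod 2) V (Fin a) (ZMod 2)).toEquiv ?_)
    intro f
    rw [inj_iff_li]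
    have : (fun i => f (Pi.single i 1)) = LinearEquiv.piRing (ZMod 2) V (Fin a) (ZMod 2) f := by
      funext i; simp
    rw [this]; rfl
  rw [Nat.card_congr e]
  by_cases hle : a ≤ Module.finrank F V
  · have := card_linearIndependent (K := F) (V := V) (k := a) hle
    rw [this, Finset.prod_range fun i => 2 ^ Module.finrank F V - 2 ^ i]
    simp [ZMod.card]
  · have : IsEmpty {v : Fin a → V // LinearIndependent F v} := by
      constructor
      intro ⟨v, hv⟩
      have := hv.fintype_card_le_finrank
      simp only [Fintype.card_fin] at this
      omega
    rw [Nat.card_of_isEmpty, eq_comm]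
    apply Finset.prod_eq_zero (Finset.mem_range.2 (lt_of_not_ge hle))
    omega

lemma card_inj_zero {a c : ℕ} (h : c < a) :
    Nat.card {f : (Fin a → F) →ₗ[F] (Fin c → F) // Function.Injective f} = 0 := by
  rw [card_inj]
  have hfr : Module.finrank F (Fin c → F) = c := by simp
  apply Finset.prod_eq_zero (i := c) (Finset.mem_range.2 h)
  rw [hfr]
  omega

lemma card_hom [FiniteDimensional F V] [Finite W] :
    Nat.card (V →ₗ[F] W) = Nat.card W ^ Module.finrank F V := by
  let b := Module.finBasis F V
  let e1 := LinearEquiv.arrowCongr (σ₁₁' := RingHom.id F) (σ₂₂' := RingHom.id F) b.equivFun (LinearEquiv.refl F W)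
  let e2 := LinearEquiv.piRing F W (Fin (Module.finrank F V)) F
  rw [Nat.card_congr (e1.toEquiv.trans e2.toEquiv), Nat.card_pi]
  simp

lemma card_comp_eq_zero [FiniteDimensional F V] [Finite W] {A : Type*} [AddCommGroup A]
    [Module F A] [FiniteDimensional F A] (ι : A →ₗ[F] V) (hι : Function.Injective ι) :
    Nat.card {M : V →ₗ[F] W // M ∘ₗ ι = 0} =
      Nat.card W ^ (Module.finrank F V - Module.finrank F A) := by
  have e : {M : V →ₗ[F] W // M ∘ₗ ι = 0} ≃ ((V ⧸ LinearMap.range ι) →ₗ[F] W) :=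
    { toFun := fun M => (LinearMap.range ι).liftQ M.1
        (by rw [LinearMap.range_le_ker_iff]; exact M.2)
      invFun := fun f => ⟨f ∘ₗ (LinearMap.range ι).mkQ, by
        ext x
        have : (Submodule.Quotient.mk (ι x) : V ⧸ LinearMap.range ι) = 0 :=
          (Submodule.Quotient.mk_eq_zero _).2 ⟨x, rfl⟩
        simp [this]⟩
      left_inv := fun M => Subtype.ext (Submodule.liftQ_mkQ _ _ _)
      right_inv := fun f => by
        apply Submodule.linearMap_qext
        exact Submodule.liftQ_mkQ _ _ _ }
  rw [Nat.card_congr e, card_hom]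
  congr 1
  have h1 := Submodule.finrank_quotient_add_finrank (LinearMap.range ι)
  have h2 : Module.finrank F (LinearMap.range ι) = Module.finrank F A :=
    LinearMap.finrank_range_of_inj hι
  omega

lemma card_comp_eq [FiniteDimensional F V] [Finite W] {a : ℕ}
    (ι : (Fin a → F) →ₗ[F] V) (hι : Function.Injective ι) (lam : (Fin a → F) →ₗ[F] W) :
    Nat.card {M : V →ₗ[F] W // M ∘ₗ ι = lam} =
      Nat.card W ^ (Module.finrank F V - a) := by
  obtain ⟨π, hπ⟩ := LinearMap.exists_leftInverse_of_injective ι (LinearMap.ker_eq_bot.2 hι)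
  have h0 : (lam ∘ₗ π) ∘ₗ ι = lam := by rw [LinearMap.comp_assoc, hπ, LinearMap.comp_id]
  have e : {M : V →ₗ[F] W // M ∘ₗ ι = lam} ≃ {M : V →ₗ[F] W // M ∘ₗ ι = 0} :=
    Equiv.subtypeEquiv (Equiv.subRight (lam ∘ₗ π)) (fun M => by
      simp only [Equiv.subRight_apply, LinearMap.sub_comp, h0, sub_eq_zero])
  rw [Nat.card_congr e, card_comp_eq_zero ι hι]
  congr 2
  simp

lemma card_pairs (L : Type) [AddCommGroup L] [Module F L] [FiniteDimensional F L]
    (a c : ℕ) (lam : (Fin a → F) →ₗ[F] L) :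
    Nat.card {p : ((Fin c → F) →ₗ[F] L) × ((Fin a → F) →ₗ[F] (Fin c → F)) //
        Function.Injective p.2 ∧ p.1 ∘ₗ p.2 = lam} =
      Nat.card {f : (Fin a → F) →ₗ[F] (Fin c → F) // Function.Injective f} *
        Nat.card L ^ (c - a) := by
  classical
  have : Finite L := Module.finite_of_finite F
  have e : {p : ((Fin c → F) →ₗ[F] L) × ((Fin a → F) →ₗ[F] (Fin c → F)) //
        Function.Injective p.2 ∧ p.1 ∘ₗ p.2 = lam} ≃
      Σ ι : ((Fin a → F) →ₗ[F] (Fin c → F)),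
        {M : (Fin c → F) →ₗ[F] L // Function.Injective ι ∧ M ∘ₗ ι = lam} :=
    (Equiv.subtypeEquiv (Equiv.prodComm _ _) (fun p => Iff.rfl)).trans
      (Equiv.subtypeProdEquivSigmaSubtype
        (fun (ι : (Fin a → F) →ₗ[F] (Fin c → F)) (M : (Fin c → F) →ₗ[F] L) =>
          Function.Injective ι ∧ M ∘ₗ ι = lam))
  have : Finite ((Fin a → F) →ₗ[F] (Fin c → F)) :=
    Finite.of_injective _ DFunLike.coe_injective
  have : Finite ((Fin c → F) →ₗ[F] L) := Finite.of_injective _ DFunLike.coe_injective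
  rw [Nat.card_congr e]
  rw [Nat.card_eq_fintype_card]
  rw [Fintype.card_sigma]
  have hterm : ∀ ι : ((Fin a → F) →ₗ[F] (Fin c → F)),
      Fintype.card {M : (Fin c → F) →ₗ[F] L // Function.Injective ι ∧ M ∘ₗ ι = lam} =
        if Function.Injective ι then Nat.card L ^ (c - a) else 0 := by
    intro ι
    by_cases hι : Function.Injective ι
    · rw [if_pos hι, ← Nat.card_eq_fintype_card]
      rw [Nat.card_congr (Equiv.subtypeEquivRight (fun M => and_iff_right hι))]
      rw [card_comp_eq ι hι lam]
      congr 2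
      simp
    · rw [if_neg hι, Fintype.card_eq_zero_iff]
      exact ⟨fun M => hι M.2.1⟩
  rw [Finset.sum_congr rfl (fun ι _ => hterm ι), ← Finset.sum_filter,
    Finset.sum_const, Nat.card_eq_fintype_card, smul_eq_mul]
  congr 1
  rw [Nat.card_eq_fintype_card, Fintype.card_subtype]

lemma card_inj_ker {m n : ℕ} (a : ℕ) (T : Matrix (Fin m) (Fin n) F) :
    Nat.card {φ : (Fin a → F) →ₗ[F] (Fin n → F) //
        Function.Injective φ ∧ T.mulVecLin ∘ₗ φ = 0} =
      ∏ i ∈ Finset.range a,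
        (2 ^ Module.finrank F (LinearMap.ker T.mulVecLin) - 2 ^ i) := by
  set K := LinearMap.ker T.mulVecLin
  have e : {φ : (Fin a → F) →ₗ[F] (Fin n → F) //
        Function.Injective φ ∧ T.mulVecLin ∘ₗ φ = 0} ≃
      {f : (Fin a → F) →ₗ[F] K // Function.Injective f} :=
    { toFun := fun φ => ⟨LinearMap.codRestrict K φ.1
        (fun x => by
          have := congrFun (congrArg DFunLike.coe φ.2.2) x
          exact LinearMap.mem_ker.mpr (by simpa using this)),
        fun x y hxy => φ.2.1 (by simpa [Subtype.ext_iff] using hxy)⟩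
      invFun := fun f => ⟨K.subtype ∘ₗ f.1,
        (Subtype.coe_injective.comp f.2 : _), by
          apply LinearMap.ext
          intro x
          simpa using LinearMap.mem_ker.mp (f.1 x).2⟩
      left_inv := fun φ => Subtype.ext rfl
      right_inv := fun f => Subtype.ext rfl }
  rw [Nat.card_congr e, card_inj]

lemma card_matrix_comp {m n a : ℕ} (φ : (Fin a → F) →ₗ[F] (Fin n → F))
    (hφ : Function.Injective φ) :
    Nat.card {T : Matrix (Fin m) (Fin n) F // T.mulVecLin ∘ₗ φ = 0} =
      2 ^ (m * (n - a)) := by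
  have e : {T : Matrix (Fin m) (Fin n) F // T.mulVecLin ∘ₗ φ = 0} ≃
      {g : (Fin n → F) →ₗ[F] (Fin m → F) // g ∘ₗ φ = 0} :=
    Equiv.subtypeEquiv (Matrix.toLin' (R := F)).toEquiv
      (fun T => by rw [show (Matrix.toLin' (R := F)).toEquiv T = T.mulVecLin from
        Matrix.toLin'_apply' T])
  rw [Nat.card_congr e, card_comp_eq_zero φ hφ]
  have h1 : Nat.card (Fin m → F) = 2 ^ m := by
    rw [Nat.card_pi]
    simp [Nat.card_eq_fintype_card, ZMod.card]
  rw [h1, ← pow_mul]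
  congr 1
  simp [Module.finrank_pi]

lemma sum_count (m n a : ℕ) :
    ∑ T : Matrix (Fin m) (Fin n) F,
      Nat.card {φ : (Fin a → F) →ₗ[F] (Fin n → F) //
        Function.Injective φ ∧ T.mulVecLin ∘ₗ φ = 0} =
      Nat.card {f : (Fin a → F) →ₗ[F] (Fin n → F) // Function.Injective f} *
        2 ^ (m * (n - a)) := by
  classical
  have hfin : Finite ((Fin a → F) →ₗ[F] (Fin n → F)) :=
    Finite.of_injective _ DFunLike.coe_injective
  have e1 : {q : Matrix (Fin m) (Fin n) F × ((Fin a → F) →ₗ[F] (Fin n → F)) //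
        Function.Injective q.2 ∧ q.1.mulVecLin ∘ₗ q.2 = 0} ≃
      Σ T : Matrix (Fin m) (Fin n) F, {φ : (Fin a → F) →ₗ[F] (Fin n → F) //
        Function.Injective φ ∧ T.mulVecLin ∘ₗ φ = 0} :=
    Equiv.subtypeProdEquivSigmaSubtype
      (fun (T : Matrix (Fin m) (Fin n) F) (φ : (Fin a → F) →ₗ[F] (Fin n → F)) =>
        Function.Injective φ ∧ T.mulVecLin ∘ₗ φ = 0)
  have e2 : {q : Matrix (Fin m) (Fin n) F × ((Fin a → F) →ₗ[F] (Fin n → F)) //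
        Function.Injective q.2 ∧ q.1.mulVecLin ∘ₗ q.2 = 0} ≃
      Σ φ : ((Fin a → F) →ₗ[F] (Fin n → F)), {T : Matrix (Fin m) (Fin n) F //
        Function.Injective φ ∧ T.mulVecLin ∘ₗ φ = 0} :=
    (Equiv.subtypeEquiv (Equiv.prodComm _ _) (fun p => Iff.rfl)).trans
      (Equiv.subtypeProdEquivSigmaSubtype
        (fun (φ : (Fin a → F) →ₗ[F] (Fin n → F)) (T : Matrix (Fin m) (Fin n) F) =>
          Function.Injective φ ∧ T.mulVecLin ∘ₗ φ = 0))
  have key : ∀ φ : ((Fin a → F) →ₗ[F] (Fin n → F)),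
      Nat.card {T : Matrix (Fin m) (Fin n) F //
          Function.Injective φ ∧ T.mulVecLin ∘ₗ φ = 0} =
        if Function.Injective φ then 2 ^ (m * (n - a)) else 0 := by
    intro φ
    by_cases hφ : Function.Injective φ
    · rw [if_pos hφ, Nat.card_congr (Equiv.subtypeEquivRight (fun T => and_iff_right hφ)),
        card_matrix_comp φ hφ]
    · rw [if_neg hφ, Nat.card_eq_zero]
      exact Or.inl ⟨fun T => hφ T.2.1⟩
  calc ∑ T : Matrix (Fin m) (Fin n) F,
      Nat.card {φ : (Fin a → F) →ₗ[F] (Fin n → F) //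
        Function.Injective φ ∧ T.mulVecLin ∘ₗ φ = 0}
      = ∑ T : Matrix (Fin m) (Fin n) F,
        Fintype.card {φ : (Fin a → F) →ₗ[F] (Fin n → F) //
          Function.Injective φ ∧ T.mulVecLin ∘ₗ φ = 0} :=
        Finset.sum_congr rfl (fun T _ => Nat.card_eq_fintype_card)
    _ = Fintype.card {q : Matrix (Fin m) (Fin n) F × ((Fin a → F) →ₗ[F] (Fin n → F)) //
        Function.Injective q.2 ∧ q.1.mulVecLin ∘ₗ q.2 = 0} := by
        rw [Fintype.card_congr e1, Fintype.card_sigma]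
    _ = ∑ φ : ((Fin a → F) →ₗ[F] (Fin n → F)),
        Nat.card {T : Matrix (Fin m) (Fin n) F //
          Function.Injective φ ∧ T.mulVecLin ∘ₗ φ = 0} := by
        rw [Fintype.card_congr e2, Fintype.card_sigma]
        exact Finset.sum_congr rfl (fun φ _ => Nat.card_eq_fintype_card.symm)
    _ = ∑ φ : ((Fin a → F) →ₗ[F] (Fin n → F)),
        if Function.Injective φ then 2 ^ (m * (n - a)) else 0 :=
        Finset.sum_congr rfl (fun φ _ => key φ)
    _ = Nat.card {f : (Fin a → F) →ₗ[F] (Fin n → F) // Function.Injective f} *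
        2 ^ (m * (n - a)) := by
        rw [← Finset.sum_filter, Finset.sum_const, smul_eq_mul,
          Nat.card_eq_fintype_card, Fintype.card_subtype]

end Stmt14Aux

/-- Proposition `V_consis`: for a finite-dimensional `𝔽₂`-vector space `ℒ`, an integer `u`,
and a linear map `λ : 𝔽₂^a → ℒ`, the sums
`∑_{c = max(u,0)}^{n} P^Mat(c | (n-u)×n) · (#ℒ)^{-c} · ∑_{L : 𝔽₂^c →ₗ ℒ} #{ι : 𝔽₂^a ↪ 𝔽₂^c
injective, L∘ι = λ}` (the inner double sum being the number of pairs `(L, ι)`)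
converge, as `n → ∞`, to `(#ℒ)^{-a} · 2^{au}`. -/
theorem stmt14 (L : Type) [AddCommGroup L] [Module (ZMod 2) L]
    [FiniteDimensional (ZMod 2) L] (u : ℤ) (a : ℕ)
    (lam : (Fin a → ZMod 2) →ₗ[ZMod 2] L) :
    Filter.Tendsto
      (fun n : ℕ =>
        ∑ c ∈ Finset.Icc u.toNat n,
          PMat ((n : ℤ) - u).toNat n c * (Nat.card L : ℝ) ^ (-(c : ℤ)) *
            Nat.card {p : ((Fin c → ZMod 2) →ₗ[ZMod 2] L) ×
                ((Fin a → ZMod 2) →ₗ[ZMod 2] (Fin c → ZMod 2)) //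
              Function.Injective p.2 ∧ p.1 ∘ₗ p.2 = lam})
      Filter.atTop
      (nhds ((Nat.card L : ℝ) ^ (-(a : ℤ)) * 2 ^ ((a : ℤ) * u))) := by
  classical
  have hLf : Finite L := Module.finite_of_finite (ZMod 2)
  have hL1 : 1 ≤ Nat.card L := Nat.one_le_iff_ne_zero.2 (Nat.card_ne_zero.2 ⟨⟨0⟩, hLf⟩)
  have hLne : (Nat.card L : ℝ) ≠ 0 := Nat.cast_ne_zero.2 (by omega)
  have h2ne : (2:ℝ) ≠ 0 := two_ne_zero
  have hmain : ∀ n : ℕ, a ≤ n → u.toNat ≤ n →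
      (∑ c ∈ Finset.Icc u.toNat n,
          PMat ((n : ℤ) - u).toNat n c * (Nat.card L : ℝ) ^ (-(c : ℤ)) *
            Nat.card {p : ((Fin c → ZMod 2) →ₗ[ZMod 2] L) ×
                ((Fin a → ZMod 2) →ₗ[ZMod 2] (Fin c → ZMod 2)) //
              Function.Injective p.2 ∧ p.1 ∘ₗ p.2 = lam}) =
      (Nat.card L : ℝ) ^ (-(a : ℤ)) *
        ∏ i ∈ Finset.range a, ((2:ℝ) ^ u - 2 ^ (u + (i:ℤ) - (n:ℤ))) := by
    intro n han hun
    have hu_le : u ≤ (n:ℤ) := le_trans (Int.self_le_toNat u) (by exact_mod_cast hun)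
    set m := ((n:ℤ) - u).toNat with hmdef
    have hm : (m:ℤ) = (n:ℤ) - u := Int.toNat_of_nonneg (by omega)
    have step1 : ∀ c ∈ Finset.Icc u.toNat n,
        PMat m n c * (Nat.card L : ℝ) ^ (-(c : ℤ)) *
            (Nat.card {p : ((Fin c → ZMod 2) →ₗ[ZMod 2] L) ×
                ((Fin a → ZMod 2) →ₗ[ZMod 2] (Fin c → ZMod 2)) //
              Function.Injective p.2 ∧ p.1 ∘ₗ p.2 = lam} : ℝ) =
          (Nat.card L : ℝ) ^ (-(a : ℤ)) *
            (PMat m n c * (Nat.card {f : (Fin a → ZMod 2) →ₗ[ZMod 2] (Fin c → ZMod 2) //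
              Function.Injective f} : ℝ)) := by
      intro c _
      rw [Stmt14Aux.card_pairs L a c lam]
      by_cases hac : a ≤ c
      · have h1 : (Nat.card L : ℝ) ^ (-(c:ℤ)) * (Nat.card L : ℝ) ^ ((c - a : ℕ)) =
            (Nat.card L : ℝ) ^ (-(a:ℤ)) := by
          rw [← zpow_natCast (Nat.card L : ℝ) (c - a), ← zpow_add₀ hLne]
          congr 1
          omega
        push_cast
        calc PMat m n c * (Nat.card L : ℝ) ^ (-(c:ℤ)) *
            ((Nat.card {f : (Fin a → ZMod 2) →ₗ[ZMod 2] (Fin c → ZMod 2) //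
              Function.Injective f} : ℝ) * (Nat.card L : ℝ) ^ ((c - a : ℕ)))
            = ((Nat.card L : ℝ) ^ (-(c:ℤ)) * (Nat.card L : ℝ) ^ ((c - a : ℕ))) *
              (PMat m n c * (Nat.card {f : (Fin a → ZMod 2) →ₗ[ZMod 2] (Fin c → ZMod 2) //
                Function.Injective f} : ℝ)) := by ring
          _ = _ := by rw [h1]
      · rw [Stmt14Aux.card_inj_zero (lt_of_not_ge hac)]
        simp
    rw [Finset.sum_congr rfl step1, ← Finset.mul_sum]
    congr 1
    -- the key counting identity
    have hmap : ∀ T : Matrix (Fin m) (Fin n) (ZMod 2),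
        Module.finrank (ZMod 2) (LinearMap.ker T.mulVecLin) ∈ Finset.Icc u.toNat n := by
      intro T
      have h1 := LinearMap.finrank_range_add_finrank_ker T.mulVecLin
      have h2 : Module.finrank (ZMod 2) (LinearMap.range T.mulVecLin) ≤ m := by
        have := Submodule.finrank_le (LinearMap.range T.mulVecLin)
        simpa using this
      have h3 : Module.finrank (ZMod 2) (LinearMap.ker T.mulVecLin) ≤ n := by
        have := Submodule.finrank_le (LinearMap.ker T.mulVecLin)
        simpa using this
      simp only [Module.finrank_pi, Fintype.card_fin] at h1
      rw [Finset.mem_Icc]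
      omega
    have hnat : ∑ c ∈ Finset.Icc u.toNat n,
        (Nat.card {T : Matrix (Fin m) (Fin n) (ZMod 2) //
          Module.finrank (ZMod 2) (LinearMap.ker T.mulVecLin) = c}) *
          Nat.card {f : (Fin a → ZMod 2) →ₗ[ZMod 2] (Fin c → ZMod 2) //
              Function.Injective f} =
        Nat.card {f : (Fin a → ZMod 2) →ₗ[ZMod 2] (Fin n → ZMod 2) //
            Function.Injective f} * 2 ^ (m * (n - a)) := by
      rw [← Stmt14Aux.sum_count m n a,
        ← Finset.sum_fiberwise_of_maps_to (fun T _ => hmap T)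
          (fun T => Nat.card {φ : (Fin a → ZMod 2) →ₗ[ZMod 2] (Fin n → ZMod 2) //
            Function.Injective φ ∧ T.mulVecLin ∘ₗ φ = 0})]
      apply Finset.sum_congr rfl
      intro c hc
      have hinner : ∀ T ∈ Finset.univ.filter (fun T : Matrix (Fin m) (Fin n) (ZMod 2) =>
          Module.finrank (ZMod 2) (LinearMap.ker T.mulVecLin) = c),
          Nat.card {φ : (Fin a → ZMod 2) →ₗ[ZMod 2] (Fin n → ZMod 2) //
            Function.Injective φ ∧ T.mulVecLin ∘ₗ φ = 0} =
          Nat.card {f : (Fin a → ZMod 2) →ₗ[ZMod 2] (Fin c → ZMod 2) //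
              Function.Injective f} := by
        intro T hT
        have hd : Module.finrank (ZMod 2) (LinearMap.ker T.mulVecLin) = c :=
          (Finset.mem_filter.1 hT).2
        rw [Stmt14Aux.card_inj_ker, Stmt14Aux.card_inj, hd]
        apply Finset.prod_congr rfl
        intro i _
        congr 2
        simp
      rw [Finset.sum_congr rfl hinner, Finset.sum_const, smul_eq_mul]
      congr 1
      rw [Nat.card_eq_fintype_card, Fintype.card_subtype]
    -- now the real computation
    have hsum : ∑ c ∈ Finset.Icc u.toNat n,
        PMat m n c * (Nat.card {f : (Fin a → ZMod 2) →ₗ[ZMod 2] (Fin c → ZMod 2) //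
          Function.Injective f} : ℝ) =
        ((Nat.card {f : (Fin a → ZMod 2) →ₗ[ZMod 2] (Fin n → ZMod 2) //
            Function.Injective f} * 2 ^ (m * (n - a)) : ℕ) : ℝ) / 2 ^ (m * n) := by
      rw [← hnat]
      push_cast
      rw [Finset.sum_div]
      apply Finset.sum_congr rfl
      intro c _
      rw [PMat]
      ring
    rw [hsum]
    -- cast the injection count
    have hfr : Module.finrank (ZMod 2) (Fin n → ZMod 2) = n := by simp
    have hIn : ((Nat.card {f : (Fin a → ZMod 2) →ₗ[ZMod 2] (Fin n → ZMod 2) //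
        Function.Injective f} : ℕ) : ℝ) =
        ∏ i ∈ Finset.range a, ((2:ℝ) ^ (n:ℕ) - 2 ^ (i:ℕ)) := by
      rw [Stmt14Aux.card_inj, hfr, Nat.cast_prod]
      apply Finset.prod_congr rfl
      intro i hi
      have hin : i ≤ n := le_trans (le_of_lt (Finset.mem_range.1 hi)) han
      rw [Nat.cast_sub (Nat.pow_le_pow_right (by norm_num) hin)]
      push_cast
      ring
    push_cast
    rw [hIn]
    have hpow : (2:ℝ) ^ (m * (n - a)) / 2 ^ (m * n) = ((2:ℝ) ^ (-(m:ℤ))) ^ a := by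
      rw [← zpow_natCast (2:ℝ) (m * (n - a)), ← zpow_natCast (2:ℝ) (m * n),
        ← zpow_sub₀ h2ne, ← zpow_natCast ((2:ℝ) ^ (-(m:ℤ))) a, ← _root_.zpow_mul]
      congr 1
      have hsplit : m * (n - a) + m * a = m * n := by
        rw [← Nat.mul_add]
        congr 1
        omega
      have h4 : (-(m:ℤ)) * (a:ℤ) = -((m * a : ℕ) : ℤ) := by push_cast; ring
      rw [h4]
      omega
    have hdistrib : ∏ i ∈ Finset.range a, (((2:ℝ) ^ (n:ℕ) - 2 ^ (i:ℕ)) * (2:ℝ) ^ (-(m:ℤ))) =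
        (∏ i ∈ Finset.range a, ((2:ℝ) ^ (n:ℕ) - 2 ^ (i:ℕ))) * ((2:ℝ) ^ (-(m:ℤ))) ^ a := by
      rw [Finset.prod_mul_distrib, Finset.prod_const, Finset.card_range]
    rw [mul_div_assoc, hpow, ← hdistrib]
    apply Finset.prod_congr rfl
    intro i hi
    have e1 : (n:ℤ) + (-(m:ℤ)) = u := by omega
    have e2 : (i:ℤ) + (-(m:ℤ)) = u + (i:ℤ) - (n:ℤ) := by omega
    rw [sub_mul, ← zpow_natCast (2:ℝ) n, ← zpow_natCast (2:ℝ) i,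
      ← zpow_add₀ h2ne, ← zpow_add₀ h2ne, e1, e2]
  -- the limit
  have hzero : ∀ i : ℕ, Filter.Tendsto (fun n : ℕ => (2:ℝ) ^ (u + (i:ℤ) - (n:ℤ)))
      Filter.atTop (nhds 0) := by
    intro i
    have hrw : ∀ n : ℕ, (2:ℝ) ^ (u + (i:ℤ) - (n:ℤ)) = (2:ℝ) ^ (u + (i:ℤ)) * (2⁻¹) ^ n := by
      intro n
      rw [zpow_sub₀ h2ne, zpow_natCast, div_eq_mul_inv, inv_pow]
    simp only [hrw]
    have h := tendsto_pow_atTop_nhds_zero_of_lt_one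
      (by norm_num : (0:ℝ) ≤ 2⁻¹) (by norm_num : (2⁻¹:ℝ) < 1)
    simpa using h.const_mul ((2:ℝ) ^ (u + (i:ℤ)))
  have hprod : Filter.Tendsto
      (fun n : ℕ => (Nat.card L : ℝ) ^ (-(a : ℤ)) *
        ∏ i ∈ Finset.range a, ((2:ℝ) ^ u - 2 ^ (u + (i:ℤ) - (n:ℤ))))
      Filter.atTop (nhds ((Nat.card L : ℝ) ^ (-(a : ℤ)) *
        ∏ i ∈ Finset.range a, ((2:ℝ) ^ u - 0))) := by
    apply Filter.Tendsto.const_mul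
    apply tendsto_finset_prod
    intro i _
    exact tendsto_const_nhds.sub (hzero i)
  have hval : (Nat.card L : ℝ) ^ (-(a : ℤ)) * ∏ i ∈ Finset.range a, ((2:ℝ) ^ u - 0) =
      (Nat.card L : ℝ) ^ (-(a : ℤ)) * 2 ^ ((a : ℤ) * u) := by
    congr 1
    simp only [sub_zero, Finset.prod_const, Finset.card_range]
    rw [← zpow_natCast ((2:ℝ) ^ u) a, ← _root_.zpow_mul, mul_comm]
  rw [hval] at hprod
  apply hprod.congr'
  rw [Filter.eventuallyEq_iff_exists_mem]
  refine ⟨{n | max a u.toNat ≤ n}, Filter.mem_atTop _, ?_⟩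
  intro n hn
  simp only [Set.mem_setOf_eq, max_le_iff] at hn
  exact (hmain n hn.1 hn.2).symm
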